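/- Let H be a Hilbert space, let a₁, …, aₙ be bounded operators on H, and let P₁, …, Pₙ be mutually orthogonal orthogonal projections on H such that (1 − P_k)·a_k·(1 − P_k) = 0 for each k. Then ‖Σ_{k=1}^{n} a_k‖ ≤ max_{k} ‖a_k‖ + ‖Σ_{k=1}^{n} (1 − P_k)·a_k·a_k*·(1 − P_k)‖^{1/2} + ‖Σ_{k=1}^{n} (1 − P_k)·a_k*·a_k·(1 − P_k)‖^{1/2}. -/

import Mathlib

set_option linter.unusedSectionVars false

open scoped InnerProductSpace

section Aux
variable {H : Type*} [NormedAddCommGroup H] [InnerProductSpace ℂ H] [CompleteSpace H]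

lemma voi_aux_sa_inner (P : H →L[ℂ] H) (hsa : IsSelfAdjoint P) (u w : H) :
    ⟪P u, w⟫_ℂ = ⟪u, P w⟫_ℂ := by
  conv_lhs => rw [← hsa.adjoint_eq]
  rw [ContinuousLinearMap.adjoint_inner_left]

lemma voi_aux_proj_norm_le (P : H →L[ℂ] H) (hsa : IsSelfAdjoint P)
    (hidem : IsIdempotentElem P) (x : H) : ‖P x‖ ≤ ‖x‖ := by
  have h1 : ‖P x‖ ^ 2 ≤ ‖x‖ * ‖P x‖ := by
    calc ‖P x‖ ^ 2 = RCLike.re ⟪P x, P x⟫_ℂ := (inner_self_eq_norm_sq _).symm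
      _ = RCLike.re ⟪x, P (P x)⟫_ℂ := by rw [voi_aux_sa_inner P hsa]
      _ = RCLike.re ⟪x, P x⟫_ℂ := by
          rw [show P (P x) = (P * P) x from rfl, hidem.eq]
      _ ≤ ‖⟪x, P x⟫_ℂ‖ := RCLike.re_le_norm _
      _ ≤ ‖x‖ * ‖P x‖ := norm_inner_le_norm x (P x)
  rcases eq_or_lt_of_le (norm_nonneg (P x)) with h0 | h0
  · rw [← h0]; exact norm_nonneg x
  · nlinarith

lemma voi_aux_pythag (n : ℕ) (P : Fin n → (H →L[ℂ] H))
    (hsa : ∀ k, IsSelfAdjoint (P k))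
    (horth : ∀ j k, j ≠ k → P j * P k = 0) (v : Fin n → H) :
    ‖∑ k, P k (v k)‖ ^ 2 = ∑ k, ‖P k (v k)‖ ^ 2 := by
  have horthv : ∀ j k, j ≠ k → ⟪P j (v j), P k (v k)⟫_ℂ = 0 := by
    intro j k hjk
    rw [voi_aux_sa_inner (P j) (hsa j),
      show (P j) (P k (v k)) = (P j * P k) (v k) from rfl, horth j k hjk]
    simp
  calc ‖∑ k, P k (v k)‖ ^ 2
      = RCLike.re ⟪∑ j, P j (v j), ∑ k, P k (v k)⟫_ℂ := (inner_self_eq_norm_sq _).symm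
    _ = RCLike.re (∑ j, ∑ k, ⟪P j (v j), P k (v k)⟫_ℂ) := by
        rw [sum_inner]
        congr 1
        exact Finset.sum_congr rfl fun j _ => inner_sum _ _ _
    _ = RCLike.re (∑ j, ⟪P j (v j), P j (v j)⟫_ℂ) := by
        congr 1
        refine Finset.sum_congr rfl fun j _ => ?_
        exact Finset.sum_eq_single j (fun k _ hk => horthv j k (Ne.symm hk))
          (fun h => absurd (Finset.mem_univ j) h)
    _ = ∑ j, RCLike.re ⟪P j (v j), P j (v j)⟫_ℂ := by rw [map_sum]
    _ = ∑ k, ‖P k (v k)‖ ^ 2 :=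
        Finset.sum_congr rfl fun j _ => inner_self_eq_norm_sq _

lemma voi_aux_diag_mul {n : ℕ} (f g : Fin n → (H →L[ℂ] H))
    (h : ∀ j k, j ≠ k → f j * g k = 0) :
    (∑ j, f j) * (∑ k, g k) = ∑ k, f k * g k := by
  rw [Finset.sum_mul_sum]
  refine Finset.sum_congr rfl fun j _ => ?_
  exact Finset.sum_eq_single j (fun k _ hk => h j k (Ne.symm hk))
    (fun h => absurd (Finset.mem_univ j) h)

lemma voi_aux_block (n : ℕ) (P b : Fin n → (H →L[ℂ] H))
    (hsa : ∀ k, IsSelfAdjoint (P k))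
    (hidem : ∀ k, IsIdempotentElem (P k))
    (horth : ∀ j k, j ≠ k → P j * P k = 0)
    (M : ℝ) (hM0 : 0 ≤ M) (hMb : ∀ k, ‖b k‖ ≤ M) :
    ‖∑ k, P k * b k * P k‖ ≤ M := by
  refine ContinuousLinearMap.opNorm_le_bound _ hM0 fun x => ?_
  set Q : H →L[ℂ] H := ∑ k, P k with hQ
  have hQsa : IsSelfAdjoint Q := by
    rw [IsSelfAdjoint, hQ, star_sum]
    exact Finset.sum_congr rfl fun k _ => (hsa k).star_eq
  have hQidem : IsIdempotentElem Q := by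
    unfold IsIdempotentElem
    rw [hQ, voi_aux_diag_mul P P horth]
    exact Finset.sum_congr rfl fun k _ => (hidem k).eq
  have hx : ∑ k, ‖P k x‖ ^ 2 ≤ ‖x‖ ^ 2 := by
    have h1 : ‖Q x‖ ^ 2 = ∑ k, ‖P k x‖ ^ 2 := by
      rw [hQ, show (∑ k, P k) x = ∑ k, P k x from ContinuousLinearMap.sum_apply _ _ _]
      exact voi_aux_pythag n P hsa horth (fun _ => x)
    rw [← h1]
    have := voi_aux_proj_norm_le Q hQsa hQidem x
    nlinarith [norm_nonneg (Q x), norm_nonneg x]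
  have key : ‖(∑ k, P k * b k * P k) x‖ ^ 2 ≤ (M * ‖x‖) ^ 2 := by
    have e : (∑ k, P k * b k * P k) x = ∑ k, P k (b k (P k x)) := by
      rw [ContinuousLinearMap.sum_apply]
      exact Finset.sum_congr rfl fun _ _ => rfl
    rw [e, voi_aux_pythag n P hsa horth (fun k => b k (P k x))]
    calc ∑ k, ‖P k (b k (P k x))‖ ^ 2 ≤ ∑ k, M ^ 2 * ‖P k x‖ ^ 2 := by
          refine Finset.sum_le_sum fun k _ => ?_
          have h1 : ‖P k (b k (P k x))‖ ≤ M * ‖P k x‖ := by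
            calc ‖P k (b k (P k x))‖ ≤ ‖b k (P k x)‖ :=
                  voi_aux_proj_norm_le (P k) (hsa k) (hidem k) _
              _ ≤ ‖b k‖ * ‖P k x‖ := (b k).le_opNorm _
              _ ≤ M * ‖P k x‖ := by
                  exact mul_le_mul_of_nonneg_right (hMb k) (norm_nonneg _)
          calc ‖P k (b k (P k x))‖ ^ 2 ≤ (M * ‖P k x‖) ^ 2 := by
                exact pow_le_pow_left₀ (norm_nonneg _) h1 2
            _ = M ^ 2 * ‖P k x‖ ^ 2 := by ring
      _ = M ^ 2 * ∑ k, ‖P k x‖ ^ 2 := (Finset.mul_sum _ _ _).symm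
      _ ≤ M ^ 2 * ‖x‖ ^ 2 := by
          exact mul_le_mul_of_nonneg_left hx (by positivity)
      _ = (M * ‖x‖) ^ 2 := by ring
  have hnn : (0:ℝ) ≤ M * ‖x‖ := by positivity
  nlinarith [norm_nonneg ((∑ k, P k * b k * P k) x)]

end Aux

/-- Operator-theoretic core of the operator-valued Voiculescu inequality:
if `P₁,…,Pₙ` are mutually orthogonal orthogonal projections on a Hilbert
space `H` and `(1−P_k)·a_k·(1−P_k) = 0` for each `k`, then
`‖Σ a_k‖ ≤ max_k ‖a_k‖ + ‖Σ (1−P_k) a_k a_k* (1−P_k)‖^{1/2}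
  + ‖Σ (1−P_k) a_k* a_k (1−P_k)‖^{1/2}`. -/
theorem voiculescu_operator_inequality {H : Type*} [NormedAddCommGroup H]
    [InnerProductSpace ℂ H] [CompleteSpace H] (n : ℕ)
    (a P : Fin n → (H →L[ℂ] H))
    (hsa : ∀ k, IsSelfAdjoint (P k))
    (hidem : ∀ k, IsIdempotentElem (P k))
    (horth : ∀ j k, j ≠ k → P j * P k = 0)
    (hmean : ∀ k, (1 - P k) * a k * (1 - P k) = 0) :
    ‖∑ k, a k‖ ≤ (⨆ k, ‖a k‖)
      + Real.sqrt ‖∑ k, (1 - P k) * a k * star (a k) * (1 - P k)‖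
      + Real.sqrt ‖∑ k, (1 - P k) * star (a k) * a k * (1 - P k)‖ := by
  rcases Nat.eq_zero_or_pos n with hn | hn
  · subst hn; simp
  -- basic consequences of hmean
  have hL : ∀ k, (1 - P k) * a k * P k = (1 - P k) * a k := by
    intro k
    have h := hmean k
    rw [mul_sub, mul_one, sub_eq_zero] at h
    exact h.symm
  have hR : ∀ k, P k * (a k * (1 - P k)) = a k * (1 - P k) := by
    intro k
    have h := hmean k
    rw [sub_mul, one_mul, sub_mul, sub_eq_zero] at h
    rw [← mul_assoc]
    exact h.symm
  have hLs : ∀ k, P k * (star (a k) * (1 - P k)) = star (a k) * (1 - P k) := by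
    intro k
    have h := congrArg star (hL k)
    simp only [star_mul, star_sub, star_one, (hsa k).star_eq] at h
    simpa [mul_assoc] using h
  have hRs : ∀ k, (1 - P k) * star (a k) * P k = (1 - P k) * star (a k) := by
    intro k
    have h := congrArg star (hR k)
    simp only [star_mul, star_sub, star_one, (hsa k).star_eq] at h
    simpa [mul_assoc] using h
  -- the three pieces
  set D : H →L[ℂ] H := ∑ k, P k * a k * P k with hD
  set R : H →L[ℂ] H := ∑ k, (1 - P k) * a k * P k with hRdef
  set C : H →L[ℂ] H := ∑ k, P k * (a k * (1 - P k)) with hCdef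
  have hdecomp : ∑ k, a k = D + R + C := by
    rw [hD, hRdef, hCdef, ← Finset.sum_add_distrib, ← Finset.sum_add_distrib]
    refine Finset.sum_congr rfl fun k _ => ?_
    rw [hL k, hR k]
    have h := hmean k
    simp only [sub_mul, one_mul, mul_sub, mul_one] at h
    rw [sub_eq_zero] at h
    have goal' : a k = P k * a k * P k + (a k - P k * a k) + (a k - a k * P k) := by
      rw [h]; abel
    simpa only [sub_mul, one_mul, mul_sub, mul_one] using goal'
  -- sup bound
  haveI : Nonempty (Fin n) := Fin.pos_iff_nonempty.mp hn
  have hbdd : BddAbove (Set.range fun k => ‖a k‖) := (Set.finite_range _).bddAbove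
  have hMb : ∀ k, ‖a k‖ ≤ ⨆ k, ‖a k‖ := fun k => le_ciSup hbdd k
  have hM0 : (0:ℝ) ≤ ⨆ k, ‖a k‖ := le_trans (norm_nonneg _) (hMb ⟨0, hn⟩)
  have hDle : ‖D‖ ≤ ⨆ k, ‖a k‖ :=
    voi_aux_block n P a hsa hidem horth _ hM0 hMb
  -- norm of R
  have hRR : R * star R = ∑ k, (1 - P k) * a k * star (a k) * (1 - P k) := by
    have hstar : star R = ∑ k, P k * (star (a k) * (1 - P k)) := by
      rw [hRdef, star_sum]
      refine Finset.sum_congr rfl fun k _ => ?_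
      simp only [star_mul, star_sub, star_one, (hsa k).star_eq]
    rw [hRdef, hstar, voi_aux_diag_mul]
    · refine Finset.sum_congr rfl fun k _ => ?_
      calc (1 - P k) * a k * P k * (P k * (star (a k) * (1 - P k)))
          = (1 - P k) * a k * (P k * P k) * (star (a k) * (1 - P k)) := by
            noncomm_ring
        _ = (1 - P k) * a k * P k * (star (a k) * (1 - P k)) := by
            rw [(hidem k).eq]
        _ = (1 - P k) * a k * (star (a k) * (1 - P k)) := by rw [hL k]
        _ = (1 - P k) * a k * star (a k) * (1 - P k) := by noncomm_ring
    · intro j k hjk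
      calc (1 - P j) * a j * P j * (P k * (star (a k) * (1 - P k)))
          = (1 - P j) * a j * (P j * P k) * (star (a k) * (1 - P k)) := by
            noncomm_ring
        _ = 0 := by rw [horth j k hjk]; simp
  have hRnorm : ‖R‖ = Real.sqrt ‖∑ k, (1 - P k) * a k * star (a k) * (1 - P k)‖ := by
    rw [← hRR]
    have h1 : ‖R * star R‖ = ‖R‖ * ‖R‖ := by
      have h2 := CStarRing.norm_star_mul_self (x := star R)
      rwa [star_star, norm_star] at h2
    rw [h1, Real.sqrt_mul_self (norm_nonneg R)]
  -- norm of C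
  have hCC : star C * C = ∑ k, (1 - P k) * star (a k) * a k * (1 - P k) := by
    have hstar : star C = ∑ k, (1 - P k) * star (a k) * P k := by
      rw [hCdef, star_sum]
      refine Finset.sum_congr rfl fun k _ => ?_
      simp only [star_mul, star_sub, star_one, (hsa k).star_eq]
    rw [hCdef, hstar, voi_aux_diag_mul]
    · refine Finset.sum_congr rfl fun k _ => ?_
      calc (1 - P k) * star (a k) * P k * (P k * (a k * (1 - P k)))
          = (1 - P k) * star (a k) * (P k * P k) * (a k * (1 - P k)) := by
            noncomm_ring
        _ = (1 - P k) * star (a k) * P k * (a k * (1 - P k)) := by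
            rw [(hidem k).eq]
        _ = (1 - P k) * star (a k) * (a k * (1 - P k)) := by rw [hRs k]
        _ = (1 - P k) * star (a k) * a k * (1 - P k) := by noncomm_ring
    · intro j k hjk
      calc (1 - P j) * star (a j) * P j * (P k * (a k * (1 - P k)))
          = (1 - P j) * star (a j) * (P j * P k) * (a k * (1 - P k)) := by
            noncomm_ring
        _ = 0 := by rw [horth j k hjk]; simp
  have hCnorm : ‖C‖ = Real.sqrt ‖∑ k, (1 - P k) * star (a k) * a k * (1 - P k)‖ := by
    rw [← hCC, CStarRing.norm_star_mul_self, Real.sqrt_mul_self (norm_nonneg C)]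
  calc ‖∑ k, a k‖ = ‖D + R + C‖ := by rw [hdecomp]
    _ ≤ ‖D‖ + ‖R‖ + ‖C‖ :=
        (norm_add_le _ _).trans (add_le_add (norm_add_le _ _) le_rfl)
    _ ≤ (⨆ k, ‖a k‖) + Real.sqrt ‖∑ k, (1 - P k) * a k * star (a k) * (1 - P k)‖
        + Real.sqrt ‖∑ k, (1 - P k) * star (a k) * a k * (1 - P k)‖ :=
        add_le_add (add_le_add hDle hRnorm.le) hCnorm.le
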